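/- Let f be nonnegative and Riemann integrable on [a,b], let d_{n,k} ≥ 0 satisfy (max_{1≤k≤n} d_{n,k})/n → 0, and let K : ℕ → ℕ satisfy K(n)/n → 0 (with K(n) ≤ n). Then lim_{n→∞} Σ_{k=K(n)+1}^{n} f(a + (k/n)(b−a)) · (b−a)/(n + d_{n,k}) = ∫_a^b f(x) dx. -/

import Mathlib

open Filter Finset Real

/-- `f` is Riemann integrable on `[a,b]` with Riemann integral `I`:
for every `ε > 0` there is `δ > 0` such that every tagged partition
`a = x 0 < x 1 < … < x n = b` with mesh `< δ` and tags `ξ k ∈ [x (k-1), x k]`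
has Riemann sum within `ε` of `I`. -/
def IsRiemannIntegral (f : ℝ → ℝ) (a b I : ℝ) : Prop :=
  ∀ ε > 0, ∃ δ > 0, ∀ (n : ℕ) (x ξ : ℕ → ℝ),
    0 < n → x 0 = a → x n = b →
    (∀ k ∈ Finset.Icc 1 n, x (k - 1) < x k) →
    (∀ k ∈ Finset.Icc 1 n, x k - x (k - 1) < δ) →
    (∀ k ∈ Finset.Icc 1 n, ξ k ∈ Set.Icc (x (k - 1)) (x k)) →
    |(∑ k ∈ Finset.Icc 1 n, f (ξ k) * (x k - x (k - 1))) - I| < ε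

lemma aux_id1 (n M h e ba : ℝ) (hnh : n * h = ba) :
    n * (M * (h * e)) = M * ba * e := by rw [← hnh]; ring

lemma aux_id2 (Kr n M h ba : ℝ) (hn : n ≠ 0) (hnh : n * h = ba) :
    Kr * (M * h) = M * ba * (Kr / n) := by rw [← hnh]; field_simp

lemma riemann_bound (f : ℝ → ℝ) (a b I : ℝ) (hab : a < b)
    (hf : IsRiemannIntegral f a b I) :
    ∃ M : ℝ, ∀ x ∈ Set.Icc a b, f x ≤ M := by
  obtain ⟨δ, hδ, H⟩ := hf 1 one_pos
  obtain ⟨n, hn⟩ := exists_nat_gt ((b - a) / δ)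
  have hn0 : 0 < n := by
    have h1 : (0:ℝ) < (b - a)/δ := by
      have : 0 < b - a := by linarith
      positivity
    exact_mod_cast Nat.cast_pos.mp (h1.trans hn)
  have hnR : (0:ℝ) < n := Nat.cast_pos.mpr hn0
  set h : ℝ := (b - a)/n with hh_def
  have hh : 0 < h := by
    have : 0 < b - a := by linarith
    positivity
  have hhδ : h < δ := by
    have h1 : b - a < n * δ := (div_lt_iff₀ hδ).mp hn
    rw [hh_def, div_lt_iff₀ hnR]; linarith
  set x : ℕ → ℝ := fun k => a + k * h with hx_def
  have hx0 : x 0 = a := by simp [hx_def]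
  have hxn : x n = b := by
    have : (n:ℝ) ≠ 0 := ne_of_gt hnR
    simp only [hx_def, hh_def]; field_simp; ring
  have hwidth : ∀ k ∈ Finset.Icc 1 n, x k - x (k - 1) = h := by
    intro k hk
    have h1 : 1 ≤ k := (Finset.mem_Icc.mp hk).1
    have hc : ((k - 1 : ℕ) : ℝ) = (k:ℝ) - 1 := by
      push_cast [Nat.cast_sub h1]; ring
    simp only [hx_def, hc]; ring
  have hmono : ∀ k ∈ Finset.Icc 1 n, x (k - 1) < x k := by
    intro k hk; have := hwidth k hk; linarith
  have hmesh : ∀ k ∈ Finset.Icc 1 n, x k - x (k - 1) < δ := by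
    intro k hk; rw [hwidth k hk]; exact hhδ
  have hne : (Finset.Icc 1 n).Nonempty := Finset.nonempty_Icc.mpr hn0
  set M₀ : ℝ := (Finset.Icc 1 n).sup' hne (fun k => f (x k)) with hM₀
  refine ⟨M₀ + 2/h, ?_⟩
  intro t ht
  set c : ℝ := (t - a)/h with hc_def
  have hc0 : 0 ≤ c := div_nonneg (by linarith [ht.1]) hh.le
  have hcn : c ≤ n := by
    rw [hc_def, div_le_iff₀ hh]
    have : t ≤ b := ht.2
    have hb : b = a + n * h := hxn.symm
    linarith [hb ▸ this]
  set j : ℕ := max 1 ⌈c⌉₊ with hj_def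
  have hj1 : 1 ≤ j := le_max_left _ _
  have hjn : j ≤ n := max_le hn0 (Nat.ceil_le.mpr hcn)
  have hjIcc : j ∈ Finset.Icc 1 n := Finset.mem_Icc.mpr ⟨hj1, hjn⟩
  have hjc : ((j - 1 : ℕ) : ℝ) = (j:ℝ) - 1 := by push_cast [Nat.cast_sub hj1]; ring
  have htle : t ≤ x j := by
    have h1 : c ≤ ⌈c⌉₊ := Nat.le_ceil c
    have h2 : (⌈c⌉₊ : ℝ) ≤ j := by exact_mod_cast Nat.cast_le.mpr (le_max_right 1 ⌈c⌉₊)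
    have : t = a + c * h := by rw [hc_def]; field_simp; ring
    rw [this, hx_def]
    have : c * h ≤ j * h := by nlinarith
    simpa using this
  have htge : x (j - 1) ≤ t := by
    have hteq : t = a + c * h := by rw [hc_def]; field_simp; ring
    have hle : (j:ℝ) - 1 ≤ c := by
      rcases Nat.eq_zero_or_pos ⌈c⌉₊ with h0 | h0
      · have : j = 1 := by simp [hj_def, h0]
        rw [this]; simpa using hc0
      · have hje : j = ⌈c⌉₊ := by simp [hj_def, Nat.one_le_iff_ne_zero.mpr (Nat.pos_iff_ne_zero.mp h0)]
        have := Nat.ceil_lt_add_one hc0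
        rw [hje]; linarith
    simp only [hx_def, hjc]
    nlinarith
  set ξ : ℕ → ℝ := fun k => if k = j then t else x k with hξ_def
  have htags : ∀ k ∈ Finset.Icc 1 n, ξ k ∈ Set.Icc (x (k - 1)) (x k) := by
    intro k hk
    by_cases hkj : k = j
    · subst hkj; simp only [hξ_def, if_pos rfl]; exact ⟨htge, htle⟩
    · simp only [hξ_def, if_neg hkj]
      exact ⟨le_of_lt (hmono k hk), le_refl _⟩
  have htags' : ∀ k ∈ Finset.Icc 1 n, x k ∈ Set.Icc (x (k - 1)) (x k) := by
    intro k hk; exact ⟨le_of_lt (hmono k hk), le_refl _⟩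
  have hS1 := H n x ξ hn0 hx0 hxn hmono hmesh htags
  have hS2 := H n x x hn0 hx0 hxn hmono hmesh htags'
  set S₁ := ∑ k ∈ Finset.Icc 1 n, f (ξ k) * (x k - x (k - 1)) with hS₁
  set S₂ := ∑ k ∈ Finset.Icc 1 n, f (x k) * (x k - x (k - 1)) with hS₂
  have hdiff : S₁ - S₂ = (f t - f (x j)) * h := by
    rw [hS₁, hS₂, ← Finset.sum_sub_distrib]
    rw [Finset.sum_eq_single_of_mem j hjIcc (fun k hk hkj => by
      simp [hξ_def, if_neg hkj])]
    rw [hwidth j hjIcc]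
    simp [hξ_def]; ring
  have h2 : (f t - f (x j)) * h < 2 := by
    rw [← hdiff]
    have := abs_lt.mp hS1
    have := abs_lt.mp hS2
    linarith [(abs_lt.mp hS1).2, (abs_lt.mp hS2).1]
  have hfj : f (x j) ≤ M₀ := Finset.le_sup' (fun k => f (x k)) hjIcc
  have : f t - f (x j) < 2/h := by
    rw [lt_div_iff₀ hh]; linarith
  linarith

set_option maxHeartbeats 1000000 in
theorem deleting_Kn_disturbing_mesh (f : ℝ → ℝ) (a b I : ℝ) (hab : a < b)
    (hf : IsRiemannIntegral f a b I)
    (hpos : ∀ x ∈ Set.Icc a b, 0 ≤ f x)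
    (d : ℕ → ℕ → ℝ)
    (hd0 : ∀ n : ℕ, ∀ k ∈ Finset.Icc 1 n, 0 ≤ d n k)
    (hd : ∀ ε > 0, ∃ N : ℕ, ∀ n ≥ N, ∀ k ∈ Finset.Icc 1 n, d n k / n < ε)
    (K : ℕ → ℕ) (hKle : ∀ n, K n ≤ n)
    (hK : Tendsto (fun n : ℕ => (K n : ℝ) / n) atTop (nhds 0)) :
    Tendsto (fun n : ℕ =>
      ∑ k ∈ Finset.Icc (K n + 1) n, f (a + (k : ℝ) / n * (b - a)) * ((b - a) / (n + d n k)))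
      atTop (nhds I) := by
  obtain ⟨M₀, hM₀⟩ := riemann_bound f a b I hab hf
  set M : ℝ := max M₀ 1 with hM_def
  have hM1 : (1:ℝ) ≤ M := le_max_right _ _
  have hMpos : 0 < M := lt_of_lt_of_le one_pos hM1
  have hM : ∀ x ∈ Set.Icc a b, f x ≤ M := fun x hx => (hM₀ x hx).trans (le_max_left _ _)
  have hba : 0 < b - a := by linarith
  rw [Metric.tendsto_atTop]
  intro ε hε
  set ε3 : ℝ := ε / 3 with hε3_def
  have hε3 : 0 < ε3 := by positivity
  obtain ⟨δ, hδ, H⟩ := hf ε3 hε3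
  set ε' : ℝ := ε3 / (M * (b - a) + 1) with hε'_def
  have hMba : 0 < M * (b - a) := by positivity
  have hε' : 0 < ε' := by positivity
  have hkey : M * (b - a) * ε' < ε3 := by
    have h1 : (M * (b - a) + 1) * ε' = ε3 := by
      rw [hε'_def]; field_simp
    nlinarith
  obtain ⟨N₁, hN₁⟩ := hd ε' hε'
  have hKev : ∀ᶠ n in atTop, (K n : ℝ) / n < ε' := hK.eventually (gt_mem_nhds hε')
  obtain ⟨N₂, hN₂⟩ := Filter.eventually_atTop.mp hKev
  obtain ⟨N₃, hN₃⟩ := exists_nat_gt ((b - a) / δ)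
  refine ⟨max (max N₁ N₂) (max N₃ 1), ?_⟩
  intro n hn
  have hn1 : 1 ≤ n := le_trans (le_trans (le_max_right N₃ 1) (le_max_right _ _)) hn
  have hn0 : 0 < n := hn1
  have hnN₁ : N₁ ≤ n := le_trans (le_trans (le_max_left N₁ N₂) (le_max_left _ _)) hn
  have hnN₂ : N₂ ≤ n := le_trans (le_trans (le_max_right N₁ N₂) (le_max_left _ _)) hn
  have hnN₃ : N₃ ≤ n := le_trans (le_trans (le_max_left N₃ 1) (le_max_right _ _)) hn
  have hnR : (0:ℝ) < n := Nat.cast_pos.mpr hn0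
  set h : ℝ := (b - a)/n with hh_def
  have hh : 0 < h := by positivity
  have hnh : (n:ℝ) * h = b - a := by
    rw [hh_def, mul_comm, div_mul_cancel₀ _ (ne_of_gt hnR)]
  have hhδ : h < δ := by
    have hN₃n : ((b - a)/δ) < (n:ℝ) := lt_of_lt_of_le hN₃ (Nat.cast_le.mpr hnN₃)
    have h1 : b - a < n * δ := (div_lt_iff₀ hδ).mp hN₃n
    rw [hh_def, div_lt_iff₀ hnR]; linarith
  set x : ℕ → ℝ := fun k => a + k * h with hx_def
  have hx0 : x 0 = a := by simp [hx_def]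
  have hxn : x n = b := by
    have : (n:ℝ) ≠ 0 := ne_of_gt hnR
    simp only [hx_def, hh_def]; field_simp; ring
  have hwidth : ∀ k ∈ Finset.Icc 1 n, x k - x (k - 1) = h := by
    intro k hk
    have h1 : 1 ≤ k := (Finset.mem_Icc.mp hk).1
    have hc : ((k - 1 : ℕ) : ℝ) = (k:ℝ) - 1 := by push_cast [Nat.cast_sub h1]; ring
    simp only [hx_def, hc]; ring
  have hmono : ∀ k ∈ Finset.Icc 1 n, x (k - 1) < x k := by
    intro k hk; have := hwidth k hk; linarith
  have hmesh : ∀ k ∈ Finset.Icc 1 n, x k - x (k - 1) < δ := by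
    intro k hk; rw [hwidth k hk]; exact hhδ
  have htags : ∀ k ∈ Finset.Icc 1 n, x k ∈ Set.Icc (x (k - 1)) (x k) := by
    intro k hk; exact ⟨le_of_lt (hmono k hk), le_refl _⟩
  -- points are in [a,b]
  have hxmem : ∀ k ∈ Finset.Icc 1 n, x k ∈ Set.Icc a b := by
    intro k hk
    obtain ⟨hk1, hkn⟩ := Finset.mem_Icc.mp hk
    constructor
    · simp only [hx_def]; nlinarith [Nat.cast_nonneg (α := ℝ) k]
    · have : (k:ℝ) ≤ n := Nat.cast_le.mpr hkn
      have hxnb : a + (n:ℝ) * h = b := hxn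
      simp only [hx_def]; nlinarith
  -- the point in the statement equals x k
  have hpt : ∀ k : ℕ, a + (k : ℝ) / n * (b - a) = x k := by
    intro k
    simp only [hx_def, hh_def]
    ring
  -- Riemann sum estimate
  have hR : |(∑ k ∈ Finset.Icc 1 n, f (x k) * h) - I| < ε3 := by
    have := H n x x hn0 hx0 hxn hmono hmesh htags
    have heq : (∑ k ∈ Finset.Icc 1 n, f (x k) * (x k - x (k - 1)))
        = ∑ k ∈ Finset.Icc 1 n, f (x k) * h :=
      Finset.sum_congr rfl (fun k hk => by rw [hwidth k hk])
    rwa [heq] at this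
  -- bounds on f at grid points
  have hf0 : ∀ k ∈ Finset.Icc 1 n, 0 ≤ f (x k) := fun k hk => hpos _ (hxmem k hk)
  have hfM : ∀ k ∈ Finset.Icc 1 n, f (x k) ≤ M := fun k hk => hM _ (hxmem k hk)
  -- weights
  set w : ℕ → ℝ := fun k => (b - a) / (n + d n k) with hw_def
  have hwle : ∀ k ∈ Finset.Icc 1 n, w k ≤ h ∧ h - w k ≤ h * ε' := by
    intro k hk
    have hdk : 0 ≤ d n k := hd0 n k hk
    have hdk' : d n k / n < ε' := hN₁ n hnN₁ k hk
    have hden : (0:ℝ) < n + d n k := by linarith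
    constructor
    · rw [hw_def, hh_def]
      apply div_le_div_of_nonneg_left hba.le hnR
      linarith
    · have heq : h - w k = (b - a) * d n k / (n * (n + d n k)) := by
        rw [hw_def, hh_def]
        field_simp
        ring
      rw [heq]
      have h1 : (b - a) * d n k / (n * (n + d n k)) ≤ (b - a) * d n k / (n * n) := by
        apply div_le_div_of_nonneg_left (by positivity) (by positivity)
        nlinarith
      have h2 : (b - a) * d n k / (n * n) = h * (d n k / n) := by
        rw [hh_def]; field_simp
      have h3 : h * (d n k / n) ≤ h * ε' := mul_le_mul_of_nonneg_left hdk'.le hh.le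
      linarith
  -- rewrite the sums using Ioc
  have hIcc1 : Finset.Icc 1 n = Finset.Ioc 0 n := by
    ext k; simp [Nat.lt_iff_add_one_le]
  have hIccK : Finset.Icc (K n + 1) n = Finset.Ioc (K n) n := by
    ext k; simp only [Finset.mem_Icc, Finset.mem_Ioc]; omega
  have hsub : ∀ k ∈ Finset.Ioc (K n) n, k ∈ Finset.Icc 1 n := by
    intro k hk
    obtain ⟨hk1, hk2⟩ := Finset.mem_Ioc.mp hk
    exact Finset.mem_Icc.mpr ⟨Nat.one_le_iff_ne_zero.mpr (by omega), hk2⟩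
  have hsub0 : ∀ k ∈ Finset.Ioc 0 (K n), k ∈ Finset.Icc 1 n := by
    intro k hk
    obtain ⟨hk1, hk2⟩ := Finset.mem_Ioc.mp hk
    exact Finset.mem_Icc.mpr ⟨hk1, le_trans hk2 (hKle n)⟩
  set S : ℝ := ∑ k ∈ Finset.Icc (K n + 1) n, f (a + (k : ℝ) / n * (b - a)) * ((b - a) / (n + d n k)) with hS_def
  set T : ℝ := ∑ k ∈ Finset.Ioc (K n) n, f (x k) * h with hT_def
  set R : ℝ := ∑ k ∈ Finset.Ioc 0 n, f (x k) * h with hR_def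
  clear_value S T R
  have hSeq : S = ∑ k ∈ Finset.Ioc (K n) n, f (x k) * w k := by
    rw [hS_def, hIccK]
    exact Finset.sum_congr rfl (fun k _ => by rw [hpt k, hw_def])
  -- T - S bounds
  have hTS : T - S = ∑ k ∈ Finset.Ioc (K n) n, f (x k) * (h - w k) := by
    rw [hT_def, hSeq, ← Finset.sum_sub_distrib]
    exact Finset.sum_congr rfl (fun k _ => by ring)
  have hTS0 : 0 ≤ T - S := by
    rw [hTS]
    apply Finset.sum_nonneg
    intro k hk
    have hw := hwle k (hsub k hk)
    exact mul_nonneg (hf0 k (hsub k hk)) (by linarith [hw.1])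
  have hTS1 : T - S ≤ M * (b - a) * ε' := by
    rw [hTS]
    have hcard : ((Finset.Ioc (K n) n).card : ℝ) ≤ (n:ℝ) := by
      have h9 : (Finset.Ioc (K n) n).card ≤ n := by
        rw [Nat.card_Ioc]; exact Nat.sub_le n (K n)
      exact Nat.cast_le.mpr h9
    have hcard2 : (Finset.Ioc (K n) n).card ≤ n := by
      rw [Nat.card_Ioc]; exact Nat.sub_le n (K n)
    calc ∑ k ∈ Finset.Ioc (K n) n, f (x k) * (h - w k)
        ≤ ∑ k ∈ Finset.Ioc (K n) n, M * (h * ε') := by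
          apply Finset.sum_le_sum
          intro k hk
          have hw := hwle k (hsub k hk)
          exact mul_le_mul (hfM k (hsub k hk)) hw.2 (by linarith [hw.1]) hMpos.le
      _ = ((Finset.Ioc (K n) n).card : ℝ) * (M * (h * ε')) := by
          rw [Finset.sum_const, nsmul_eq_mul]
      _ ≤ (n:ℝ) * (M * (h * ε')) := by
          apply mul_le_mul_of_nonneg_right hcard
          positivity
      _ = M * (b - a) * ε' := aux_id1 _ _ _ _ _ hnh
  -- R - T bounds (head sum)
  have hhead : R = (∑ k ∈ Finset.Ioc 0 (K n), f (x k) * h) + T := by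
    rw [hR_def, hT_def, Finset.sum_Ioc_consecutive _ (Nat.zero_le (K n)) (hKle n)]
  have hRT0 : 0 ≤ R - T := by
    rw [hhead]
    have : 0 ≤ ∑ k ∈ Finset.Ioc 0 (K n), f (x k) * h := by
      apply Finset.sum_nonneg
      intro k hk
      have := hf0 k (hsub0 k hk)
      positivity
    linarith
  have hKn : (K n : ℝ) / n < ε' := hN₂ n hnN₂
  have hRT1 : R - T ≤ M * (b - a) * ε' := by
    have hbound : (∑ k ∈ Finset.Ioc 0 (K n), f (x k) * h) ≤ ((K n : ℝ)) * (M * h) := by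
      calc ∑ k ∈ Finset.Ioc 0 (K n), f (x k) * h
          ≤ ∑ k ∈ Finset.Ioc 0 (K n), M * h := by
            apply Finset.sum_le_sum
            intro k hk
            exact mul_le_mul_of_nonneg_right (hfM k (hsub0 k hk)) hh.le
        _ = ((Finset.Ioc 0 (K n)).card : ℝ) * (M * h) := by
            rw [Finset.sum_const, nsmul_eq_mul]
        _ = ((K n : ℝ)) * (M * h) := by rw [Nat.card_Ioc]; norm_num
    have h2 : ((K n : ℝ)) * (M * h) ≤ M * (b - a) * ε' := by
      have h3 : ((K n : ℝ)) * (M * h) = M * (b - a) * ((K n : ℝ)/n) :=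
        aux_id2 _ _ _ _ _ (ne_of_gt hnR) hnh
      rw [h3]
      exact mul_le_mul_of_nonneg_left hKn.le hMba.le
    rw [hhead]; linarith
  -- conclusion
  have hRI : |R - I| < ε3 := by rw [hR_def, ← hIcc1]; exact hR
  have habs := abs_lt.mp hRI
  rw [Real.dist_eq, abs_lt]
  have hε3eq : ε3 = ε / 3 := rfl
  constructor
  · nlinarith [hkey]
  · nlinarith [hkey]
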